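/- The Heawood graph defined as the Fano incidence graph is isomorphic to the graph given by LCF notation (5, -5)⁷: the graph on vertex set ZMod 14 whose edges are the Hamiltonian cycle edges {i, i+1} for all i : ZMod 14 together with the chords {i, i+5} for all even i. -/
import Mathlib

/-- The Heawood graph as the bipartite incidence graph of the Fano plane. -/
def heawoodGraph : SimpleGraph (ZMod 7 ⊕ ZMod 7) :=
  SimpleGraph.fromRel (fun u v => ∃ i j : ZMod 7,
    u = Sum.inl i ∧ v = Sum.inr j ∧ (j - i = 1 ∨ j - i = 2 ∨ j - i = 4))

/-- The LCF graph `(5, -5)⁷` on `ZMod 14`: Hamiltonian cycle edges `{i, i+1}` for all `i`,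
together with chords `{i, i+5}` for all `i` with even standard representative. -/
def lcfHeawood : SimpleGraph (ZMod 14) :=
  SimpleGraph.fromRel (fun u v => v = u + 1 ∨ (Even u.val ∧ v = u + 5))

def hlFun : ZMod 7 ⊕ ZMod 7 → ZMod 14
  | Sum.inl i => (2 * i.val : ℕ)
  | Sum.inr j => (2 * j.val + 11 : ℕ)

def hlInv : ZMod 14 → ZMod 7 ⊕ ZMod 7 := fun t =>
  if Even t.val then Sum.inl ((t.val / 2 : ℕ) : ZMod 7)
  else Sum.inr (((t.val + 3) / 2 : ℕ) : ZMod 7)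

def hlEquiv : (ZMod 7 ⊕ ZMod 7) ≃ ZMod 14 where
  toFun := hlFun
  invFun := hlInv
  left_inv := by decide
  right_inv := by decide

instance : DecidableRel heawoodGraph.Adj := fun a b => by
  unfold heawoodGraph; rw [SimpleGraph.fromRel_adj]; infer_instance

instance : DecidableRel lcfHeawood.Adj := fun a b => by
  unfold lcfHeawood; rw [SimpleGraph.fromRel_adj]; infer_instance

theorem hl_key : ∀ a b, lcfHeawood.Adj (hlEquiv a) (hlEquiv b) ↔ heawoodGraph.Adj a b := by
  decide

/-- The Fano incidence graph is isomorphic to the LCF graph `(5, -5)⁷`. -/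
theorem heawood_iso_lcf : Nonempty (heawoodGraph ≃g lcfHeawood) := by
  exact ⟨⟨hlEquiv, fun {a b} => hl_key a b⟩⟩
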